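/- Let p₁, p₂ be probability mass functions on {1,…,n} with p₂(i)/p₁(i) ≤ w whenever p₁(i) > 0, and let p̂₁, p̂₂ be estimates satisfying |p̂₁(i) − p₁(i)| ≤ p₁(i)·ε/16 and |p̂₂(i) − p₂(i)| ≤ p₂(i)·ε/16 for all i in a set H. Then ∑_{i∈H} |p₂(i) − p̂₂(i)·(p₁(i)/p̂₁(i))| ≤ (ε/4)·∑_{i∈H} p₂(i) ≤ ε/4. -/

import Mathlib

open Finset

theorem heavy_points_l1_bound
    (n : ℕ) (ε w : ℝ) (hε : 0 < ε) (hε1 : ε < 1) (hw : 1 ≤ w)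
    (p₁ p₂ phat₁ phat₂ : Fin n → ℝ)
    (hp₁0 : ∀ i, 0 ≤ p₁ i) (hp₂0 : ∀ i, 0 ≤ p₂ i)
    (hp₁1 : ∑ i, p₁ i = 1) (hp₂1 : ∑ i, p₂ i = 1)
    (H : Finset (Fin n))
    (hpos : ∀ i ∈ H, 0 < p₁ i)
    (hratio : ∀ i ∈ H, p₂ i / p₁ i ≤ w)
    (hest₁ : ∀ i ∈ H, |phat₁ i - p₁ i| ≤ p₁ i * ε / 16)
    (hest₂ : ∀ i ∈ H, |phat₂ i - p₂ i| ≤ p₂ i * ε / 16) :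
    ∑ i ∈ H, |p₂ i - phat₂ i * (p₁ i / phat₁ i)| ≤ ε / 4 * ∑ i ∈ H, p₂ i
      ∧ ε / 4 * ∑ i ∈ H, p₂ i ≤ ε / 4 := by
  constructor
  · rw [Finset.mul_sum]
    apply Finset.sum_le_sum
    intro i hi
    have h1 := hpos i hi
    have he1 := abs_le.mp (hest₁ i hi)
    have he2 := abs_le.mp (hest₂ i hi)
    have hp2 := hp₂0 i
    have ha : 0 < phat₁ i := by nlinarith
    have key : p₂ i - phat₂ i * (p₁ i / phat₁ i)
        = (p₂ i * phat₁ i - phat₂ i * p₁ i) / phat₁ i := by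
      field_simp
    rw [key, abs_div, abs_of_pos ha, div_le_iff₀ ha]
    rw [abs_le]
    constructor <;> nlinarith [mul_nonneg hp2 h1.le, mul_nonneg (mul_nonneg hp2 h1.le) hε.le]
  · have hsum : ∑ i ∈ H, p₂ i ≤ 1 := by
      rw [← hp₂1]
      exact Finset.sum_le_sum_of_subset_of_nonneg (Finset.subset_univ H)
        (fun i _ _ => hp₂0 i)
    nlinarith
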